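/- The element t̃ − 1 is not a zero divisor in A⁰: if x ∈ A⁰ satisfies (t̃ − 1)·x = 0, then x = 0. -/

import Mathlib

/-- The directed set `D` of positive integers coprime to `p`. -/
def Coprimes (p : ℕ) : Type := {n : ℕ // 0 < n ∧ Nat.Coprime n p}

/-- The transition map `π_{m,n} : R[ℤ/m] → R[ℤ/n]` (for `n ∣ m`) induced by the reduction
map `ℤ/m → ℤ/n`. -/
noncomputable def transMap (R : Type*) [CommRing R] {m n : ℕ} (h : n ∣ m) :
    AddMonoidAlgebra R (ZMod m) →+* AddMonoidAlgebra R (ZMod n) :=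
  AddMonoidAlgebra.mapDomainRingHom R ((ZMod.castHom h (ZMod n)).toAddMonoidHom)

/-- The property of being a compatible family, i.e., of lying in the inverse limit
`A⁰ = lim_{n ∈ D} R[ℤ/n]`, realized inside the product ring `∏_{n ∈ D} R[ℤ/n]`. -/
def IsCompatible (R : Type*) [CommRing R] (p : ℕ)
    (x : ∀ n : Coprimes p, AddMonoidAlgebra R (ZMod n.1)) : Prop :=
  ∀ (m n : Coprimes p) (h : n.1 ∣ m.1), transMap R h (x m) = x n

/-- The element `t̃ ∈ A⁰` whose `n`-th component is the group element `1 ∈ ℤ/n` viewed in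
`R[ℤ/n]`. -/
noncomputable def ttilde (R : Type*) [CommRing R] (p : ℕ) :
    ∀ n : Coprimes p, AddMonoidAlgebra R (ZMod n.1) :=
  fun n => AddMonoidAlgebra.single (1 : ZMod n.1) (1 : R)

/-- `t̃ - 1` is not a zero divisor in `A⁰`: if `x ∈ A⁰` satisfies `(t̃ - 1)·x = 0`
then `x = 0`. Here `R` is a finite nonzero commutative `ℤ/ℓ^r`-algebra and `p` is either `1`
or a prime different from `ℓ`. -/
theorem stmt11 (R : Type*) [CommRing R] [Finite R] [Nontrivial R]
    (ℓ r : ℕ) (hℓ : ℓ.Prime) (hr : 1 ≤ r) (hR : (ℓ : R) ^ r = 0)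
    (p : ℕ) (hp : p = 1 ∨ (p.Prime ∧ p ≠ ℓ))
    (x : ∀ n : Coprimes p, AddMonoidAlgebra R (ZMod n.1))
    (hx : IsCompatible R p x)
    (h : (ttilde R p - 1) * x = 0) : x = 0 := by
  have hℓp : Nat.Coprime ℓ p := by
    rcases hp with rfl | ⟨hpp, hne⟩
    · exact Nat.coprime_one_right ℓ
    · exact (Nat.coprime_primes hℓ hpp).mpr (fun e => hne e.symm)
  funext n
  set N := n.1 with hN
  set M := N * ℓ ^ r with hM
  have hMpos : 0 < M := Nat.mul_pos n.2.1 (Nat.pow_pos hℓ.pos)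
  have hMcop : Nat.Coprime M p := Nat.Coprime.mul n.2.2 (Nat.Coprime.pow_left r hℓp)
  set m : Coprimes p := ⟨M, hMpos, hMcop⟩ with hm
  have hdvd : n.1 ∣ m.1 := Dvd.intro _ rfl
  have hMne : NeZero M := ⟨hMpos.ne'⟩
  set y : AddMonoidAlgebra R (ZMod M) := x m with hy
  -- the relation at level m
  have h1 : AddMonoidAlgebra.single (1 : ZMod M) (1 : R) * y = y := by
    have := congrFun h m
    simp only [Pi.mul_apply, Pi.sub_apply, Pi.one_apply, Pi.zero_apply, ttilde] at this
    rw [sub_mul, one_mul, sub_eq_zero] at this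
    exact this
  -- hence y is "shift-invariant", so a constant function
  have hshift : ∀ b : ZMod M, y.coeff (1 + b) = y.coeff b := by
    intro b
    conv_lhs => rw [← h1]
    have := AddMonoidAlgebra.coeff_single_mul_eq_mul_coeff (x := y) (r := (1 : R)) (m := (1 : ZMod M)) (m₁ := 1 + b) b
      (fun a _ => by constructor <;> intro hh <;> [exact add_left_cancel hh; rw [hh]])
    rw [this, one_mul]
  have hconst : ∀ b : ZMod M, y.coeff b = y.coeff 0 := by
    have key : ∀ k : ℕ, y.coeff ((k : ZMod M)) = y.coeff 0 := by
      intro k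
      induction k with
      | zero => simp
      | succ k ih => rw [Nat.cast_succ, add_comm, hshift, ih]
    intro b
    conv_lhs => rw [← ZMod.natCast_rightInverse b]
    exact key b.val
  set c : R := y.coeff 0 with hc
  -- y as an explicit sum
  have hyeq : y = ∑ k ∈ Finset.range M, AddMonoidAlgebra.single ((k : ZMod M)) c := by
    ext b
    rw [hconst b]
    rw [AddMonoidAlgebra.coeff_sum, Finset.sum_apply']
    rw [Finset.sum_eq_single b.val]
    · rw [AddMonoidAlgebra.coeff_single_apply, if_pos (ZMod.natCast_rightInverse b)]
    · intro k hk hkb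
      rw [AddMonoidAlgebra.coeff_single_apply, if_neg]
      intro he
      exact hkb (by rw [← ZMod.val_cast_of_lt (Finset.mem_range.mp hk), he])
    · intro hb
      exact absurd (Finset.mem_range.mpr (ZMod.val_lt b)) hb
  -- push through transMap
  have hxn : x n = transMap R hdvd y := (hx m n hdvd).symm
  have hmap : transMap R hdvd y
      = ∑ k ∈ Finset.range M, AddMonoidAlgebra.single ((k : ZMod N)) c := by
    rw [hyeq, map_sum]
    refine Finset.sum_congr rfl (fun k _ => ?_)
    have hsing : transMap R hdvd (AddMonoidAlgebra.single ((k : ZMod M)) c)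
        = AddMonoidAlgebra.single (ZMod.castHom hdvd (ZMod N) ((k : ZMod M))) c := by
      simp [transMap, AddMonoidAlgebra.mapDomainRingHom, Finsupp.mapDomain.addMonoidHom_apply,
        Finsupp.mapDomain_single, AddMonoidAlgebra.mapDomainRingHom_apply,
          AddMonoidAlgebra.mapDomain_single]
    rw [hsing, map_natCast (ZMod.castHom hdvd (ZMod N)) k]
  -- periodicity: sum over range (N * ℓ^r) is ℓ^r • sum over range N
  have hper : ∀ j : ℕ, (∑ k ∈ Finset.range (N * j), AddMonoidAlgebra.single ((k : ZMod N)) c)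
      = j • ∑ k ∈ Finset.range N, AddMonoidAlgebra.single ((k : ZMod N)) c := by
    intro j
    induction j with
    | zero => simp
    | succ j ih =>
      rw [Nat.mul_succ, Finset.sum_range_add, ih, succ_nsmul]
      congr 1
      refine Finset.sum_congr rfl (fun k _ => ?_)
      congr 1
      push_cast
      simp [ZMod.natCast_self]
  have hcast : ((ℓ ^ r : ℕ) : R) = 0 := by push_cast; exact hR
  rw [Pi.zero_apply, hxn, hmap, hper (ℓ ^ r),
    ← Nat.cast_smul_eq_nsmul R, hcast, zero_smul]
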